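/- Let A be a commutative ring with a multi-center {[M_i, a_i]}_{i∈I}, let K ⊆ I and J = I \ K, and let φ : A[{M_i/a_i}_{i∈K}] → A[{M_i/a_i}_{i∈I}] be the canonical A-algebra homomorphism induced by the localization map S_K⁻¹A → S_I⁻¹A. If a_j is a non-zero-divisor in A for every j ∈ J, then φ is injective. -/

import Mathlib

/-- The dilatation `A[{M_i/a_i}_{i ∈ K}]` of a commutative ring `A` with multi-center
`{[M_i, a_i]}` restricted to a subset `K` of the index set, realized as the
sub-`A`-algebra of `S_K⁻¹A` (where `S_K` is the submonoid generated by `{a_i : i ∈ K}`)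
generated by the fractions `λ_K(m)·λ_K(a_i)⁻¹` for `i ∈ K` and `m ∈ M_i`. -/
noncomputable def dilatationOn {A : Type*} [CommRing A] {I : Type*}
    (M : I → Ideal A) (a : I → A) (K : Set I) :
    Subalgebra A (Localization (Submonoid.closure (a '' K))) :=
  Algebra.adjoin A {x | ∃ i ∈ K, ∃ m ∈ M i,
    x = algebraMap A (Localization (Submonoid.closure (a '' K))) m *
        Ring.inverse (algebraMap A (Localization (Submonoid.closure (a '' K))) (a i))}

lemma closure_image_le_comap {A : Type*} [CommRing A] {I : Type*} (a : I → A)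
    {K L : Set I} (h : K ⊆ L) :
    Submonoid.closure (a '' K) ≤ (Submonoid.closure (a '' L)).comap (RingHom.id A) := by
  rw [Submonoid.closure_le]
  rintro x ⟨i, hi, rfl⟩
  exact Submonoid.mem_comap.mpr (Submonoid.subset_closure ⟨i, h hi, rfl⟩)

/-- If `a_j` is a non-zero-divisor in `A` for every `j ∉ K`, then the canonical
`A`-algebra map `A[{M_i/a_i}_{i ∈ K}] → A[{M_i/a_i}_{i ∈ I}]` (induced by the
localization map `S_K⁻¹A → S_I⁻¹A`) is injective. -/
theorem dilatationOn_map_injective {A : Type*} [CommRing A] {I : Type*}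
    (M : I → Ideal A) (a : I → A) (K : Set I)
    (hreg : ∀ j ∉ K, a j ∈ nonZeroDivisors A) :
    Set.InjOn
      (IsLocalization.map (Localization (Submonoid.closure (a '' (Set.univ : Set I))))
        (RingHom.id A) (closure_image_le_comap a (Set.subset_univ K)))
      ((dilatationOn M a K : Set (Localization (Submonoid.closure (a '' K))))) := by
  set SK := Submonoid.closure (a '' K) with hSK
  set SI := Submonoid.closure (a '' (Set.univ : Set I)) with hSI
  set f := IsLocalization.map (S := Localization SK) (Localization SI)
      (RingHom.id A) (closure_image_le_comap a (Set.subset_univ K)) with hf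
  -- every element of S_I factors as an element of S_K times a nonzerodivisor
  have hfact : ∀ t ∈ SI, ∃ s ∈ SK, ∃ r ∈ nonZeroDivisors A, t = s * r := by
    intro t ht
    induction ht using Submonoid.closure_induction with
    | mem x hx =>
      obtain ⟨i, -, rfl⟩ := hx
      by_cases hiK : i ∈ K
      · exact ⟨a i, Submonoid.subset_closure ⟨i, hiK, rfl⟩, 1, one_mem _, (mul_one _).symm⟩
      · exact ⟨1, one_mem _, a i, hreg i hiK, (one_mul _).symm⟩
    | one => exact ⟨1, one_mem _, 1, one_mem _, (one_mul _).symm⟩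
    | mul x y _ _ hx hy =>
      obtain ⟨s₁, hs₁, r₁, hr₁, rfl⟩ := hx
      obtain ⟨s₂, hs₂, r₂, hr₂, rfl⟩ := hy
      exact ⟨s₁ * s₂, mul_mem hs₁ hs₂, r₁ * r₂, mul_mem hr₁ hr₂, by ring⟩
  have hinj : Function.Injective f := by
    rw [injective_iff_map_eq_zero f]
    intro x hx
    obtain ⟨⟨m, s⟩, rfl⟩ := IsLocalization.mk'_surjective SK x
    rw [hf, IsLocalization.map_mk'] at hx
    rw [IsLocalization.mk'_eq_zero_iff] at hx ⊢
    obtain ⟨t, ht⟩ := hx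
    obtain ⟨s', hs', r, hr, hfac⟩ := hfact (t : A) t.2
    refine ⟨⟨s', hs'⟩, ?_⟩
    have : r * (s' * m) = 0 := by
      rw [← ht, hfac]; simp [RingHom.id_apply]; ring
    exact (mem_nonZeroDivisors_iff.mp hr).2 _ (by linear_combination this)
  exact hinj.injOn
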